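/- arXiv:2312.10377 — 6 statements merged into one kernel-verified Lean document; each statement's English description precedes it below -/
import Mathlib

section
/- For any positive integers m, n, k with k ≥ 2, the graph S_1(n,k) is isomorphic to a subgraph of S_m(n,(k-1)m+1), via the map sending a word x_1x_2...x_n to (m·x_1)(m·x_2)...(m·x_n); that is, this map is an injective graph homomorphism whose image is an induced subgraph. -/
/-- `A^n_m(k)`: words of length `n` over `{0,...,k-1}` with consecutive letters differing by at least `m`. -/
def AWord (m n k : ℕ) (x : List ℕ) : Prop :=
  x.length = n ∧ (∀ a ∈ x, a < k) ∧
    ∀ i, i + 1 < n → m ≤ Nat.dist (x.getD i 0) (x.getD (i+1) 0)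

/-- de Bruijn-style adjacency: the suffix of one word equals the prefix of the other. -/
def dbAdj (u v : List ℕ) : Prop := u.tail = v.dropLast ∨ v.tail = u.dropLast

/-- The simplified de Bruijn-type graph `S_m(n,k)`. -/
def S (m n k : ℕ) : SimpleGraph {x : List ℕ // AWord m n k x} where
  Adj u v := u ≠ v ∧ dbAdj u.1 v.1
  symm := ⟨fun u v h => ⟨h.1.symm, Or.symm h.2⟩⟩
  loopless := ⟨fun u h => h.1 rfl⟩

lemma getD_map_mul (m : ℕ) (x : List ℕ) (i : ℕ) :
    (x.map (fun a => m * a)).getD i 0 = m * x.getD i 0 := by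
  simp only [List.getD_eq_getElem?_getD, List.getElem?_map]
  cases x[i]? with
  | none => simp
  | some a => simp

theorem stmt1 (m n k : ℕ) (hm : 0 < m) (hn : 0 < n) (hk : 2 ≤ k) :
    ∃ f : S 1 n k ↪g S m n ((k-1)*m+1),
      ∀ u : {x : List ℕ // AWord 1 n k x}, (f u).1 = u.1.map (fun a => m * a) := by
  have hminj : Function.Injective (fun a : ℕ => m * a) :=
    fun a b h => Nat.eq_of_mul_eq_mul_left hm h
  have hlinj : Function.Injective (List.map (fun a : ℕ => m * a)) :=
    List.map_injective_iff.2 hminj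
  have hmap : ∀ x, AWord 1 n k x → AWord m n ((k-1)*m+1) (x.map (fun a => m * a)) := by
    rintro x ⟨hlen, hbd, hdist⟩
    refine ⟨by simpa using hlen, ?_, ?_⟩
    · intro a ha
      simp only [List.mem_map] at ha
      obtain ⟨b, hb, rfl⟩ := ha
      have : b ≤ k - 1 := Nat.le_sub_one_of_lt (hbd b hb)
      have : m * b ≤ (k-1) * m := by
        calc m * b ≤ m * (k-1) := Nat.mul_le_mul_left m this
        _ = (k-1) * m := Nat.mul_comm _ _
      omega
    · intro i hi
      rw [getD_map_mul, getD_map_mul, Nat.dist_mul_left]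
      have h1 := hdist i hi
      calc m = m * 1 := (Nat.mul_one m).symm
      _ ≤ m * Nat.dist (x.getD i 0) (x.getD (i+1) 0) := Nat.mul_le_mul_left m h1
  refine ⟨⟨⟨fun u => ⟨u.1.map (fun a => m * a), hmap u.1 u.2⟩, ?_⟩, ?_⟩, fun u => rfl⟩
  · intro u v h
    exact Subtype.ext (hlinj (congrArg Subtype.val h))
  · intro u v
    show (S m n ((k-1)*m+1)).Adj ⟨u.1.map (fun a => m * a), hmap u.1 u.2⟩ ⟨v.1.map (fun a => m * a), hmap v.1 v.2⟩ ↔ (S 1 n k).Adj u v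
    simp only [S, Function.Embedding.coeFn_mk, ne_eq, Subtype.mk.injEq, dbAdj,
      ← List.map_tail, ← List.map_dropLast]
    constructor
    · rintro ⟨h1, h2⟩
      refine ⟨fun h => h1 (by rw [h]), ?_⟩
      rcases h2 with h | h
      · exact Or.inl (hlinj h)
      · exact Or.inr (hlinj h)
    · rintro ⟨h1, h2⟩
      refine ⟨fun h => h1 (Subtype.ext (hlinj h)), ?_⟩
      rcases h2 with h | h
      · exact Or.inl (congrArg _ h)
      · exact Or.inr (congrArg _ h)
end

section
/- For every n ≥ 2 and every m ≥ 1, the graph S^<_m(n,k) induced by the increasing words A^n_m(k,<) is triangle-free, for every k. -/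
/-- `A^n_m(k,<)`: m-increasing words of length `n` over `{0,...,k-1}`. -/
def AWordLt (m n k : ℕ) (x : List ℕ) : Prop :=
  x.length = n ∧ (∀ a ∈ x, a < k) ∧
    ∀ i, i + 1 < n → x.getD i 0 + m ≤ x.getD (i+1) 0

/-- The graph `S^<_m(n,k)` on m-increasing words. -/
def Slt (m n k : ℕ) : SimpleGraph {x : List ℕ // AWordLt m n k x} where
  Adj u v := u ≠ v ∧ dbAdj u.1 v.1
  symm := by constructor; intro u v h; exact ⟨h.1.symm, Or.symm h.2⟩
  loopless := by constructor; intro u h; exact h.1 rfl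

lemma head_eq_of_dir (m n k : ℕ) (hn : 2 ≤ n) (u v : List ℕ)
    (hu : AWordLt m n k u) (hv : AWordLt m n k v)
    (h : u.tail = v.dropLast) : v.getD 0 0 = u.getD 1 0 := by
  obtain ⟨hlu, -, -⟩ := hu
  obtain ⟨hlv, -, -⟩ := hv
  match u, v with
  | a :: b :: t, c :: d :: s =>
    simp only [List.tail_cons, List.dropLast_cons₂] at h
    have : b = c := (List.cons.injEq _ _ _ _ ▸ h).1
    simp [this]
  | [], _ => simp at hlu; omega
  | [a], _ => simp at hlu; omega
  | _ :: _ :: _, [] => simp at hlv; omega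
  | _ :: _ :: _, [c] => simp at hlv; omega

lemma gap (m n k : ℕ) (hn : 2 ≤ n) (u : List ℕ) (hu : AWordLt m n k u) :
    u.getD 0 0 + m ≤ u.getD 1 0 := hu.2.2 0 (by omega)

theorem stmt9 (m n k : ℕ) (hm : 1 ≤ m) (hn : 2 ≤ n) :
    (Slt m n k).CliqueFree 3 := by
  intro t ht
  obtain ⟨a, b, c, hab, hac, hbc, rfl⟩ := Finset.card_eq_three.mp ht.2
  have hA : (Slt m n k).Adj a b := ht.1 (by simp) (by simp) hab
  have hB : (Slt m n k).Adj b c := ht.1 (by simp) (by simp) hbc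
  have hC : (Slt m n k).Adj a c := ht.1 (by simp) (by simp) hac
  have ga := gap m n k hn a.1 a.2
  have gb := gap m n k hn b.1 b.2
  have gc := gap m n k hn c.1 c.2
  have dA := hA.2
  have dB := hB.2
  have dC := hC.2
  rcases dA with h1 | h1 <;> rcases dB with h2 | h2 <;> rcases dC with h3 | h3 <;>
  [ (have e1 := head_eq_of_dir m n k hn a.1 b.1 a.2 b.2 h1;
     have e2 := head_eq_of_dir m n k hn b.1 c.1 b.2 c.2 h2;
     have e3 := head_eq_of_dir m n k hn a.1 c.1 a.2 c.2 h3);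
    (have e1 := head_eq_of_dir m n k hn a.1 b.1 a.2 b.2 h1;
     have e2 := head_eq_of_dir m n k hn b.1 c.1 b.2 c.2 h2;
     have e3 := head_eq_of_dir m n k hn c.1 a.1 c.2 a.2 h3);
    (have e1 := head_eq_of_dir m n k hn a.1 b.1 a.2 b.2 h1;
     have e2 := head_eq_of_dir m n k hn c.1 b.1 c.2 b.2 h2;
     have e3 := head_eq_of_dir m n k hn a.1 c.1 a.2 c.2 h3);
    (have e1 := head_eq_of_dir m n k hn a.1 b.1 a.2 b.2 h1;
     have e2 := head_eq_of_dir m n k hn c.1 b.1 c.2 b.2 h2;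
     have e3 := head_eq_of_dir m n k hn c.1 a.1 c.2 a.2 h3);
    (have e1 := head_eq_of_dir m n k hn b.1 a.1 b.2 a.2 h1;
     have e2 := head_eq_of_dir m n k hn b.1 c.1 b.2 c.2 h2;
     have e3 := head_eq_of_dir m n k hn a.1 c.1 a.2 c.2 h3);
    (have e1 := head_eq_of_dir m n k hn b.1 a.1 b.2 a.2 h1;
     have e2 := head_eq_of_dir m n k hn b.1 c.1 b.2 c.2 h2;
     have e3 := head_eq_of_dir m n k hn c.1 a.1 c.2 a.2 h3);
    (have e1 := head_eq_of_dir m n k hn b.1 a.1 b.2 a.2 h1;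
     have e2 := head_eq_of_dir m n k hn c.1 b.1 c.2 b.2 h2;
     have e3 := head_eq_of_dir m n k hn a.1 c.1 a.2 c.2 h3);
    (have e1 := head_eq_of_dir m n k hn b.1 a.1 b.2 a.2 h1;
     have e2 := head_eq_of_dir m n k hn c.1 b.1 c.2 b.2 h2;
     have e3 := head_eq_of_dir m n k hn c.1 a.1 c.2 a.2 h3)] <;>
  omega
end

section
/- For every m ≥ 1, the graph S^<_m(2,4m) induced by increasing two-letter words over the alphabet {0,...,4m-1} is bipartite (contains no odd cycle). -/
theorem stmt10 (m : ℕ) (hm : 1 ≤ m) : (Slt m 2 (4*m)).Colorable 2 := by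
  classical
  refine ⟨SimpleGraph.Coloring.mk
    (fun u => if (u.1.getD 1 0 < 3*m ∧ u.1.getD 1 0 < 2*m) ∨
        (¬ u.1.getD 1 0 < 3*m ∧ ¬ u.1.getD 0 0 < 2*m) then (0 : Fin 2) else 1) ?_⟩
  rintro u v ⟨hne, hdb⟩ heq
  obtain ⟨a, b, hu⟩ := List.length_eq_two.mp u.2.1
  obtain ⟨c, d, hv⟩ := List.length_eq_two.mp v.2.1
  have hab : a + m ≤ b := by have := u.2.2.2 0 (by norm_num); simp [hu] at this; exact this
  have hcd : c + m ≤ d := by have := v.2.2.2 0 (by norm_num); simp [hv] at this; exact this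
  have hb : b < 4*m := u.2.2.1 b (by simp [hu])
  have hd : d < 4*m := v.2.2.1 d (by simp [hv])
  have hdb' : b = c ∨ d = a := by
    rcases hdb with h | h
    · left; simpa [hu, hv] using h
    · right; simpa [hu, hv] using h
  simp only [hu, hv] at heq
  simp only [List.getD_cons_succ, List.getD_cons_zero] at heq
  rcases hdb' with rfl | rfl
  · split_ifs at heq with h1 h2 <;> first | exact absurd heq (by decide) | omega
  · split_ifs at heq with h1 h2 <;> first | exact absurd heq (by decide) | omega
end

section
/- For every m ≥ 1, in the set A^3_m(4m,<) of m-increasing 3-letter words over {0,...,4m-1}, the three sets A = {x_1x_2x_3 : x_1 ≤ m-1, x_3 ≥ 3m}, B = {x_1x_2x_3 : m ≤ x_1 ≤ 2m-1, x_3 ≥ 3m}, and C = {x_1x_2x_3 : x_1 ≤ m-1, 2m ≤ x_3 ≤ 3m-1} form a partition of A^3_m(4m,<); every vertex of A is isolated in S^<_m(3,4m), and every edge of S^<_m(3,4m) joins a vertex of B to a vertex of C. -/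
lemma destr14 {m : ℕ} {x : List ℕ} (h : AWordLt m 3 (4*m) x) :
    ∃ a b c, x = [a,b,c] ∧ c < 4*m ∧ a+m ≤ b ∧ b+m ≤ c := by
  obtain ⟨hl, hlt, hmono⟩ := h
  match x, hl with
  | [a,b,c], _ =>
    exact ⟨a,b,c, rfl, hlt c (by simp), hmono 0 (by omega), hmono 1 (by omega)⟩

theorem stmt14 (m : ℕ) (hm : 1 ≤ m) :
    let PA : {x : List ℕ // AWordLt m 3 (4*m) x} → Prop :=
      fun v => v.1.getD 0 0 < m ∧ 3*m ≤ v.1.getD 2 0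
    let PB : {x : List ℕ // AWordLt m 3 (4*m) x} → Prop :=
      fun v => m ≤ v.1.getD 0 0 ∧ v.1.getD 0 0 < 2*m ∧ 3*m ≤ v.1.getD 2 0
    let PC : {x : List ℕ // AWordLt m 3 (4*m) x} → Prop :=
      fun v => v.1.getD 0 0 < m ∧ 2*m ≤ v.1.getD 2 0 ∧ v.1.getD 2 0 < 3*m
    (∀ v, (PA v ∧ ¬ PB v ∧ ¬ PC v) ∨ (¬ PA v ∧ PB v ∧ ¬ PC v) ∨ (¬ PA v ∧ ¬ PB v ∧ PC v)) ∧
    (∀ v, PA v → ∀ u, ¬ (Slt m 3 (4*m)).Adj v u) ∧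
    (∀ u v, (Slt m 3 (4*m)).Adj u v → (PB u ∧ PC v) ∨ (PC u ∧ PB v)) := by
  intro PA PB PC
  refine ⟨?_, ?_, ?_⟩
  · intro v
    obtain ⟨a,b,c, hv, h1,h2,h3⟩ := destr14 v.2
    simp only [PA, PB, PC, hv, List.getD_cons_zero, List.getD_cons_succ]
    omega
  · rintro v hA u ⟨-, hadj⟩
    obtain ⟨a,b,c, hv, h1,h2,h3⟩ := destr14 v.2
    obtain ⟨d,e,f, hu, g1,g2,g3⟩ := destr14 u.2
    simp only [PA, hv, List.getD_cons_zero, List.getD_cons_succ] at hA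
    rcases hadj with h | h <;>
      (rw [hv, hu] at h; simp only [List.tail_cons, List.dropLast] at h;
       simp only [List.cons.injEq, and_true] at h; omega)
  · rintro u v ⟨-, hadj⟩
    obtain ⟨a,b,c, hv, h1,h2,h3⟩ := destr14 u.2
    obtain ⟨d,e,f, hu, g1,g2,g3⟩ := destr14 v.2
    simp only [PB, PC, hv, hu, List.getD_cons_zero, List.getD_cons_succ]
    rcases hadj with h | h <;>
      (rw [hv, hu] at h; simp only [List.tail_cons, List.dropLast] at h) <;>
      · obtain ⟨h4, h5⟩ := by simpa using h
        omega
end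

section
/- For every m ≥ 1, in the set A^4_m(5m,<) of m-increasing 4-letter words over {0,...,5m-1}, the three sets A = {x : x_1 ≤ m-1 and x_4 ≥ 4m}, B = {x : m ≤ x_1 ≤ 2m-1 and x_4 ≥ 4m}, and C = {x : x_1 ≤ m-1 and 3m ≤ x_4 ≤ 4m-1} partition A^4_m(5m,<); every vertex of A is isolated in S^<_m(4,5m), and every edge of S^<_m(4,5m) joins B to C. In particular S^<_m(4,5m) is bipartite with parts A ∪ B and C. -/
lemma unpack4 {m k : ℕ} {x : List ℕ} (h : AWordLt m 4 k x) :
    ∃ a b c d, x = [a, b, c, d] ∧ a < k ∧ b < k ∧ c < k ∧ d < k ∧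
      a + m ≤ b ∧ b + m ≤ c ∧ c + m ≤ d := by
  obtain ⟨hl, hmem, hinc⟩ := h
  match x, hl with
  | [a, b, c, d], _ =>
    refine ⟨a, b, c, d, rfl, hmem a (by simp), hmem b (by simp), hmem c (by simp),
      hmem d (by simp), ?_, ?_, ?_⟩
    · exact hinc 0 (by norm_num)
    · exact hinc 1 (by norm_num)
    · exact hinc 2 (by norm_num)

theorem stmt15 (m : ℕ) (hm : 1 ≤ m) :
    let PA : {x : List ℕ // AWordLt m 4 (5*m) x} → Prop :=
      fun v => v.1.getD 0 0 < m ∧ 4*m ≤ v.1.getD 3 0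
    let PB : {x : List ℕ // AWordLt m 4 (5*m) x} → Prop :=
      fun v => m ≤ v.1.getD 0 0 ∧ v.1.getD 0 0 < 2*m ∧ 4*m ≤ v.1.getD 3 0
    let PC : {x : List ℕ // AWordLt m 4 (5*m) x} → Prop :=
      fun v => v.1.getD 0 0 < m ∧ 3*m ≤ v.1.getD 3 0 ∧ v.1.getD 3 0 < 4*m
    (∀ v, (PA v ∧ ¬ PB v ∧ ¬ PC v) ∨ (¬ PA v ∧ PB v ∧ ¬ PC v) ∨ (¬ PA v ∧ ¬ PB v ∧ PC v)) ∧
    (∀ v, PA v → ∀ u, ¬ (Slt m 4 (5*m)).Adj v u) ∧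
    (∀ u v, (Slt m 4 (5*m)).Adj u v → (PB u ∧ PC v) ∨ (PC u ∧ PB v)) := by
  intro PA PB PC
  refine ⟨?_, ?_, ?_⟩
  · intro v
    obtain ⟨a, b, c, d, hx, ha, hb, hc, hd, h1, h2, h3⟩ := unpack4 v.2
    simp only [PA, PB, PC, hx, List.getD_cons_zero, List.getD_cons_succ]
    omega
  · intro v hA u hadj
    obtain ⟨a, b, c, d, hx, ha, hb, hc, hd, h1, h2, h3⟩ := unpack4 v.2
    obtain ⟨e, f, g, i, hy, he, hf, hg, hi, k1, k2, k3⟩ := unpack4 u.2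
    simp only [PA, hx, List.getD_cons_zero, List.getD_cons_succ] at hA
    rcases hadj with ⟨-, hdb | hdb⟩ <;>
      · simp only [hx, hy, List.tail, List.dropLast, List.cons.injEq, and_true] at hdb
        omega
  · intro u v hadj
    obtain ⟨a, b, c, d, hx, ha, hb, hc, hd, h1, h2, h3⟩ := unpack4 u.2
    obtain ⟨e, f, g, i, hy, he, hf, hg, hi, k1, k2, k3⟩ := unpack4 v.2
    simp only [PB, PC, hx, hy, List.getD_cons_zero, List.getD_cons_succ]
    rcases hadj with ⟨-, hdb | hdb⟩ <;>
      · simp only [hx, hy, List.tail, List.dropLast, List.cons.injEq, and_true] at hdb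
        omega
end

section
/- Let G be an undirected graph with a semi-transitive orientation, and let C = x_1x_2...x_mx_1 be a cycle in G with m ≥ 4 such that {x_1,...,x_m} does not induce a clique in G. If m-2 of the edges of C are oriented in the same direction around the cycle, then the remaining two edges of C are both oriented in the opposite direction. -/
/-- A relation is semi-transitive if it is acyclic and for every directed path
`p 0 → p 1 → ... → p k` with an arc `p 0 → p k`, all arcs `p i → p j` (`i < j`) are present. -/
def SemiTransitive {V : Type*} (D : V → V → Prop) : Prop :=
  (∀ v, ¬ Relation.TransGen D v v) ∧
  ∀ (k : ℕ) (p : Fin (k+1) → V),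
    (∀ i : Fin k, D (p i.castSucc) (p i.succ)) →
    D (p 0) (p (Fin.last k)) →
    ∀ i j : Fin (k+1), i < j → D (p i) (p j)

/-- `D` is a semi-transitive orientation of the graph `G`. -/
def IsSemiTransOrientation {V : Type*} (G : SimpleGraph V) (D : V → V → Prop) : Prop :=
  (∀ u v, G.Adj u v ↔ (D u v ∨ D v u)) ∧ (∀ u v, D u v → ¬ D v u) ∧ SemiTransitive D

/-- The cyclic successor on `Fin m`. -/
def cyclicSucc {m : ℕ} (i : Fin m) : Fin m := ⟨(i.val + 1) % m, Nat.mod_lt _ i.pos⟩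

lemma cyclicSucc_eq_add_one {n : ℕ} (i : Fin (n+1)) : cyclicSucc i = i + 1 := by
  apply Fin.ext
  simp [cyclicSucc, Fin.add_def, Fin.val_one', Nat.add_mod, Nat.mod_mod]

lemma last_eq_neg_one {n : ℕ} : (Fin.last n : Fin (n+1)) = -1 := by
  apply Fin.ext
  simp [Fin.coe_neg_one]

theorem stmt19 {V : Type*} (G : SimpleGraph V) (D : V → V → Prop)
    (hD : IsSemiTransOrientation G D)
    (m : ℕ) (hm : 4 ≤ m) (x : Fin m → V) (hinj : Function.Injective x)
    (hcyc : ∀ i : Fin m, G.Adj (x i) (x (cyclicSucc i)))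
    (hnotclique : ∃ i j : Fin m, i ≠ j ∧ ¬ G.Adj (x i) (x j))
    (Sf : Finset (Fin m)) (hcard : Sf.card = m - 2)
    (hfwd : ∀ i ∈ Sf, D (x i) (x (cyclicSucc i))) :
    ∀ i ∉ Sf, D (x (cyclicSucc i)) (x i) := by
  obtain ⟨hadj, hasym, hacyc, hsemi⟩ := hD
  obtain ⟨n, rfl⟩ : ∃ n, m = n + 1 := ⟨m - 1, by omega⟩
  intro i hi
  by_contra hback
  have hfi : D (x i) (x (cyclicSucc i)) := by
    rcases (hadj _ _).1 (hcyc i) with h | h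
    · exact h
    · exact absurd h hback
  by_cases hall : ∀ k : Fin (n+1), D (x k) (x (cyclicSucc k))
  · -- all edges forward: directed cycle, contradiction with acyclicity
    open Fin.NatCast in
    have chain : ∀ t : ℕ, Relation.TransGen D (x 0) (x ((t+1 : ℕ) : Fin (n+1))) := by
      intro t
      induction t with
      | zero =>
        have h := hall 0
        rw [cyclicSucc_eq_add_one] at h
        exact Relation.TransGen.single (by simpa using h)
      | succ t ih =>
        have h := hall ((t+1 : ℕ) : Fin (n+1))
        rw [cyclicSucc_eq_add_one] at h
        have : (((t+1 : ℕ) : Fin (n+1)) + 1) = ((t+1+1 : ℕ) : Fin (n+1)) := by push_cast; ring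
        rw [this] at h
        exact ih.tail h
    have h := chain n
    open Fin.NatCast in
    rw [show ((n+1 : ℕ) : Fin (n+1)) = 0 from Fin.natCast_self _] at h
    exact hacyc _ h
  · push_neg at hall
    obtain ⟨j, hj⟩ := hall
    have hji : j ∉ Sf := fun h => hj (hfwd j h)
    have hne : i ≠ j := by rintro rfl; exact hj hfi
    have hbj : D (x (cyclicSucc j)) (x j) := by
      rcases (hadj _ _).1 (hcyc j) with h | h
      · exact absurd h hj
      · exact h
    -- every index not in Sf is i or j
    have hcompl : ∀ k, k ∉ Sf → k = i ∨ k = j := by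
      intro k hk
      by_contra hkk
      push_neg at hkk
      have hsub : ({k, i, j} : Finset (Fin (n+1))) ⊆ Sfᶜ := by
        intro a ha
        simp only [Finset.mem_insert, Finset.mem_singleton] at ha
        rcases ha with rfl | rfl | rfl <;> simpa using ‹_›
      have h3 : ({k, i, j} : Finset (Fin (n+1))).card = 3 := by
        rw [Finset.card_insert_of_notMem (by simp [hkk.1, hkk.2]),
          Finset.card_insert_of_notMem (by simp [hne]), Finset.card_singleton]
      have hc : (Sfᶜ : Finset (Fin (n+1))).card = 2 := by
        rw [Finset.card_compl, hcard]
        simp only [Fintype.card_fin]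
        omega
      have := Finset.card_le_card hsub
      omega
    have hfwd' : ∀ k : Fin (n+1), k ≠ j → D (x k) (x (k+1)) := by
      intro k hkj
      rw [← cyclicSucc_eq_add_one]
      by_cases hk : k ∈ Sf
      · exact hfwd k hk
      · rcases hcompl k hk with rfl | rfl
        · exact hfi
        · exact absurd rfl hkj
    -- build the path p a = x (j + 1 + a) of length n, with shortcut arc
    set p : Fin (n+1) → V := fun a => x (j + 1 + a) with hp
    have hpath : ∀ a : Fin n, D (p a.castSucc) (p a.succ) := by
      intro a
      have h1 : (j + 1 + a.castSucc : Fin (n+1)) ≠ j := by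
        intro h
        rw [add_assoc] at h
        have h0 : (1 + a.castSucc : Fin (n+1)) = 0 :=
          add_left_cancel (h.trans (add_zero j).symm)
        have h2 : (a.castSucc : Fin (n+1)) = -1 := eq_neg_of_add_eq_zero_right h0
        rw [← last_eq_neg_one] at h2
        exact absurd h2 (Fin.castSucc_lt_last a).ne
      have h := hfwd' _ h1
      have h2 : (j + 1 + a.castSucc + 1 : Fin (n+1)) = j + 1 + a.succ := by
        rw [← Fin.coeSucc_eq_succ]; abel
      rw [h2] at h
      exact h
    have harc : D (p 0) (p (Fin.last n)) := by
      have h0 : (j + 1 + (0 : Fin (n+1))) = cyclicSucc j := by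
        rw [cyclicSucc_eq_add_one]; abel
      have hl : (j + 1 + (Fin.last n : Fin (n+1))) = j := by
        rw [last_eq_neg_one]; abel
      simpa [hp, h0, hl] using hbj
    obtain ⟨a, b, hab, hnadj⟩ := hnotclique
    apply hnadj
    have key : ∀ a' b' : Fin (n+1), a' < b' → G.Adj (x (j+1+a')) (x (j+1+b')) := by
      intro a' b' hlt
      exact (hadj _ _).2 (Or.inl (hsemi n p hpath harc a' b' hlt))
    have hab' : a - (j+1) ≠ b - (j+1) := fun h => hab (by
      have := congrArg (fun z => z + (j+1)) h
      simpa [sub_add_cancel] using this)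
    rcases lt_or_gt_of_ne hab' with hlt | hlt
    · have := key _ _ hlt
      simpa [add_comm, add_sub_cancel] using this
    · have := key _ _ hlt
      have := this.symm
      simpa [add_comm, add_sub_cancel] using this
end
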